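/- Let G be a countably infinite group with a left-invariant total order ≺ whose Conradian soul is trivial, i.e., the only ≺-convex subgroup of G on which the restriction of ≺ is Conradian is the trivial subgroup {1}. Then ≺ is an accumulation point of its conjugates: for every finite subset S ⊆ G there exists h ∈ G such that the conjugate order ≺_h agrees with ≺ on S × S but ≺_h ≠ ≺. -/

import Mathlib

/-- A left-invariant total order (left order) on a group `G`. -/
def IsLeftOrder {G : Type*} [Group G] (r : G → G → Prop) : Prop :=
  IsStrictTotalOrder G r ∧ ∀ h f g : G, r f g → r (h * f) (h * g)

/-- A subgroup `C` is convex for `r` if `f ≺ g ≺ h` with `f, h ∈ C` implies `g ∈ C`. -/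
def IsConvexSubgroup {G : Type*} [Group G] (r : G → G → Prop) (C : Subgroup G) : Prop :=
  ∀ f g h : G, f ∈ C → h ∈ C → r f g → r g h → g ∈ C

/-- The restriction of `r` to the subgroup `C` is Conradian. -/
def IsConradianOn {G : Type*} [Group G] (r : G → G → Prop) (C : Subgroup G) : Prop :=
  ∀ f g : G, f ∈ C → g ∈ C → r 1 f → r 1 g → ∃ k : ℕ, r g (f * g ^ k)

/-- The conjugate of the order `r` by the group element `h`:
`f ≺_h g` iff `h⁻¹fh ≺ h⁻¹gh`. -/
def conjOrder {G : Type*} [Group G] (r : G → G → Prop) (h : G) : G → G → Prop :=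
  fun f g => r (h⁻¹ * f * h) (h⁻¹ * g * h)

/-- Non-strict version of the relation `r`. -/
abbrev Stmt6.rle {G : Type*} (r : G → G → Prop) (a b : G) : Prop := r a b ∨ a = b

/-- `f` is (weakly) between `1` and `g`. -/
abbrev Stmt6.btw {G : Type*} [Group G] (r : G → G → Prop) (g f : G) : Prop :=
  (Stmt6.rle r 1 f ∧ Stmt6.rle r f g) ∨ (Stmt6.rle r g f ∧ Stmt6.rle r f 1)

/-- Conjugation by `h` preserves positivity. -/
abbrev Stmt6.Apos {G : Type*} [Group G] (r : G → G → Prop) (h : G) : Prop :=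
  ∀ x, r 1 x ↔ r 1 (h⁻¹ * x * h)

/-- If the Conradian soul of a left order `≺` on a countably infinite group is
trivial (the only convex subgroup on which `≺` restricts to a Conradian order is
the trivial subgroup), then `≺` is an accumulation point of its conjugates. -/
theorem stmt_6 {G : Type*} [Group G] [Countable G] [Infinite G]
    (r : G → G → Prop) (hr : IsLeftOrder r)
    (hsoul : ∀ C : Subgroup G, IsConvexSubgroup r C → IsConradianOn r C → C = ⊥) :
    ∀ S : Finset G, ∃ h : G,
      (∀ a ∈ S, ∀ b ∈ S, (conjOrder r h a b ↔ r a b)) ∧ conjOrder r h ≠ r := by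
  classical
  open Stmt6 in
  obtain ⟨hsto, hL⟩ := hr
  have htrans : ∀ {a b c : G}, r a b → r b c → r a c :=
    fun h1 h2 => hsto.toIsStrictOrder.toIsTrans.trans _ _ _ h1 h2
  have hirr : ∀ a : G, ¬ r a a := hsto.toIsStrictOrder.toIrrefl.irrefl
  have hasym : ∀ {a b : G}, r a b → r b a → False := fun h1 h2 => hirr _ (htrans h1 h2)
  have htri : ∀ a b : G, r a b ∨ a = b ∨ r b a := fun a b => by haveI := hsto; exact trichotomous a b
  have hmul : ∀ (h : G) {a b : G}, r a b ↔ r (h * a) (h * b) := by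
    intro h a b
    refine ⟨hL h a b, fun hx => ?_⟩
    have := hL h⁻¹ _ _ hx
    simpa using this
  have hpos : ∀ a b : G, r a b ↔ r 1 (a⁻¹ * b) := by
    intro a b
    have := hmul a⁻¹ (a := a) (b := b)
    simpa using this
  have hflip : ∀ a : G, r a 1 ↔ r 1 a⁻¹ := by
    intro a
    simpa using hpos a 1
  -- transitivity facts for rle
  have hrr : ∀ {a b c : G}, r a b → rle r b c → r a c := by
    rintro a b c h1 (h2 | rfl)
    · exact htrans h1 h2
    · exact h1
  have hrr' : ∀ {a b c : G}, rle r a b → r b c → r a c := by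
    rintro a b c (h1 | rfl) h2
    · exact htrans h1 h2
    · exact h2
  have hrlet : ∀ {a b c : G}, rle r a b → rle r b c → rle r a c := by
    rintro a b c h1 (h2 | rfl)
    · exact Or.inl (hrr' h1 h2)
    · exact h1
  have hrle_mul : ∀ (h : G) {a b : G}, rle r a b → rle r (h * a) (h * b) := by
    rintro h a b (h1 | rfl)
    · exact Or.inl (hL h _ _ h1)
    · exact Or.inr rfl
  intro S
  by_contra hcon
  push_neg at hcon
  -- hcon : ∀ h, agreement on S → conjOrder r h = r
  -- Subgroup facts about Apos
  have hA'inv : ∀ h : G, Apos r h → Apos r h⁻¹ := by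
    intro h hA x
    have h2 := hA (h * x * h⁻¹)
    have e : h⁻¹ * (h * x * h⁻¹) * h = x := by group
    rw [e] at h2
    simpa using h2.symm
  have hA'mul : ∀ g h : G, Apos r g → Apos r h → Apos r (g * h) := by
    intro g h hg hh x
    have h1 := (hg x).trans (hh (g⁻¹ * x * g))
    have e : h⁻¹ * (g⁻¹ * x * g) * h = (g * h)⁻¹ * x * (g * h) := by group
    rw [e] at h1
    exact h1
  -- the key consequence of the contradiction hypothesis
  have hiA : ∀ f : G,
      (∀ a ∈ S, ∀ b ∈ S, r 1 (a⁻¹ * b) → r 1 (f⁻¹ * (a⁻¹ * b) * f)) → Apos r f := by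
    intro f hf
    have key : ∀ x y : G, r (f⁻¹ * x * f) (f⁻¹ * y * f) ↔ r 1 (f⁻¹ * (x⁻¹ * y) * f) := by
      intro x y
      rw [hpos]
      have e : (f⁻¹ * x * f)⁻¹ * (f⁻¹ * y * f) = f⁻¹ * (x⁻¹ * y) * f := by group
      rw [e]
    have hag : ∀ a ∈ S, ∀ b ∈ S, (conjOrder r f a b ↔ r a b) := by
      intro a ha b hb
      show r (f⁻¹ * a * f) (f⁻¹ * b * f) ↔ r a b
      rw [key a b]
      constructor
      · intro hc
        rcases htri 1 (a⁻¹ * b) with h1 | h1 | h1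
        · rw [hpos]; exact h1
        · exfalso
          rw [← h1] at hc
          simp only [mul_one, inv_mul_cancel] at hc
          exact hirr 1 hc
        · exfalso
          have h2 : r 1 (b⁻¹ * a) := by
            have h3 := (hflip (a⁻¹ * b)).mp h1
            simpa [mul_inv_rev] using h3
          have h4 := hf b hb a ha h2
          have h5 : r (f⁻¹ * (a⁻¹ * b) * f) 1 := by
            rw [hflip]
            have e : (f⁻¹ * (a⁻¹ * b) * f)⁻¹ = f⁻¹ * (b⁻¹ * a) * f := by group
            rw [e]
            exact h4
          exact hasym hc h5
      · intro hab
        exact hf a ha b hb ((hpos a b).mp hab)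
    have heq := hcon f hag
    intro x
    have h2 : conjOrder r f 1 x = r 1 x := by rw [heq]
    have h3 : conjOrder r f 1 x = r 1 (f⁻¹ * x * f) := by
      show r (f⁻¹ * 1 * f) (f⁻¹ * x * f) = r 1 (f⁻¹ * x * f)
      rw [mul_one, inv_mul_cancel]
    rw [h3] at h2
    exact (Iff.of_eq h2).symm
  -- the candidate convex subgroup
  set Cc : Set G := {g | ∀ f, btw r g f → Apos r f} with hCc
  have hmemCc : ∀ g : G, g ∈ Cc ↔ ∀ f, btw r g f → Apos r f := fun g => Iff.rfl
  have hself : ∀ g ∈ Cc, Apos r g := by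
    intro g hg
    apply (hmemCc g).mp hg g
    rcases htri 1 g with h | h | h
    · exact Or.inl ⟨Or.inl h, Or.inr rfl⟩
    · exact Or.inl ⟨Or.inr h, Or.inr rfl⟩
    · exact Or.inr ⟨Or.inr rfl, Or.inl h⟩
  have hC1 : (1 : G) ∈ Cc := by
    intro f hf
    have hf1 : rle r 1 f ∧ rle r f 1 := by
      rcases hf with h | h
      · exact h
      · exact ⟨h.1, h.2⟩
    have : f = 1 := by
      rcases hf1.1 with h1 | h1
      · rcases hf1.2 with h2 | h2
        · exact absurd (htrans h1 h2) (hirr 1)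
        · exact h2
      · exact h1.symm
    rw [this]
    intro x
    simp
  have hCinv : ∀ g ∈ Cc, g⁻¹ ∈ Cc := by
    intro g hg f hf
    have hgA := hself g hg
    have hb : btw r g (g * f) := by
      rcases hf with ⟨h1, h2⟩ | ⟨h1, h2⟩
      · refine Or.inr ⟨?_, ?_⟩
        · simpa using hrle_mul g h1
        · simpa using hrle_mul g h2
      · refine Or.inl ⟨?_, ?_⟩
        · simpa using hrle_mul g h1
        · simpa using hrle_mul g h2
    have h1 := (hmemCc g).mp hg (g * f) hb
    have h2 := hA'mul _ _ (hA'inv g hgA) h1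
    have e : g⁻¹ * (g * f) = f := by group
    rw [e] at h2
    exact h2
  have hCmul : ∀ g ∈ Cc, ∀ h ∈ Cc, g * h ∈ Cc := by
    intro g hg h hh f hf
    have hgi := hCinv g hg
    have hgA := hself g hg
    have key : Apos r (g⁻¹ * f) := by
      rcases hf with ⟨h1, h2⟩ | ⟨h1, h2⟩
      · have e1 : rle r g⁻¹ (g⁻¹ * f) := by simpa using hrle_mul g⁻¹ h1
        have e2 : rle r (g⁻¹ * f) h := by
          have := hrle_mul g⁻¹ h2
          simpa [mul_assoc] using this
        rcases htri 1 (g⁻¹ * f) with hx | hx | hx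
        · exact (hmemCc h).mp hh _ (Or.inl ⟨Or.inl hx, e2⟩)
        · exact (hmemCc h).mp hh _ (Or.inl ⟨Or.inr hx, e2⟩)
        · exact (hmemCc g⁻¹).mp hgi _ (Or.inr ⟨e1, Or.inl hx⟩)
      · have e1 : rle r h (g⁻¹ * f) := by
          have := hrle_mul g⁻¹ h1
          simpa [mul_assoc] using this
        have e2 : rle r (g⁻¹ * f) g⁻¹ := by simpa using hrle_mul g⁻¹ h2
        rcases htri (g⁻¹ * f) 1 with hx | hx | hx
        · exact (hmemCc h).mp hh _ (Or.inr ⟨e1, Or.inl hx⟩)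
        · exact (hmemCc h).mp hh _ (Or.inr ⟨e1, Or.inr hx⟩)
        · exact (hmemCc g⁻¹).mp hgi _ (Or.inl ⟨Or.inl hx, e2⟩)
    have h2 := hA'mul _ _ hgA key
    have e : g * (g⁻¹ * f) = f := by group
    rw [e] at h2
    exact h2
  set C : Subgroup G :=
    { carrier := Cc
      one_mem' := hC1
      mul_mem' := fun ha hb => hCmul _ ha _ hb
      inv_mem' := fun ha => hCinv _ ha } with hCdef
  have hmemC : ∀ g : G, g ∈ C ↔ g ∈ Cc := fun g => Iff.rfl
  have hconv : IsConvexSubgroup r C := by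
    intro f g h hf hh hfg hgh
    rw [hmemC] at hf hh ⊢
    intro e he
    rcases he with ⟨h1, h2⟩ | ⟨h1, h2⟩
    · exact (hmemCc h).mp hh e (Or.inl ⟨h1, Or.inl (hrr' h2 hgh)⟩)
    · exact (hmemCc f).mp hf e (Or.inr ⟨Or.inl (hrr hfg h1), h2⟩)
  have hconr : IsConradianOn r C := by
    intro f g hf hg h1f h1g
    refine ⟨1, ?_⟩
    have hgA : Apos r g := hself g ((hmemC g).mp hg)
    have h1 : r 1 (g⁻¹ * f * g) := (hgA f).mp h1f
    have h2 := hL g _ _ h1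
    have e1 : g * (1 : G) = g := mul_one g
    have e2 : g * (g⁻¹ * f * g) = f * g ^ 1 := by
      rw [pow_one]; group
    rw [e1, e2] at h2
    exact h2
  have hbot := hsoul C hconv hconr
  -- nontriviality: find a nonidentity element of C
  have hminU : ∀ U : Finset G, U.Nonempty → ∃ m ∈ U, ∀ x ∈ U, ¬ r x m := by
    intro U
    induction U using Finset.induction_on with
    | empty => intro h; exact absurd h (by simp)
    | @insert a s ha ih =>
      intro _
      rcases s.eq_empty_or_nonempty with rfl | hs
      · refine ⟨a, by simp, ?_⟩
        intro x hx
        simp only [LawfulSingleton.insert_empty_eq, Finset.mem_singleton] at hx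
        rw [hx]
        exact hirr a
      · obtain ⟨m, hm, hmmin⟩ := ih hs
        rcases htri a m with h | h | h
        · refine ⟨a, Finset.mem_insert_self a s, ?_⟩
          intro x hx hxa
          rcases Finset.mem_insert.mp hx with h' | hx'
          · rw [h'] at hxa; exact hirr a hxa
          · exact hmmin x hx' (htrans hxa h)
        · refine ⟨m, Finset.mem_insert_of_mem hm, ?_⟩
          intro x hx hxm
          rcases Finset.mem_insert.mp hx with h' | hx'
          · rw [h', h] at hxm; exact hirr m hxm
          · exact hmmin x hx' hxm
        · refine ⟨m, Finset.mem_insert_of_mem hm, ?_⟩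
          intro x hx hxm
          rcases Finset.mem_insert.mp hx with h' | hx'
          · rw [h'] at hxm; exact hasym hxm h
          · exact hmmin x hx' hxm
  by_cases hP : ∀ a ∈ S, ∀ b ∈ S, ¬ r 1 (a⁻¹ * b)
  · obtain ⟨g0, hg0⟩ := exists_ne (1 : G)
    have hg0C : g0 ∈ Cc := by
      intro f _
      exact hiA f (fun a ha b hb hab => absurd hab (hP a ha b hb))
    have hmem : g0 ∈ C := (hmemC g0).mpr hg0C
    rw [hbot] at hmem
    exact hg0 (Subgroup.mem_bot.mp hmem)
  · push_neg at hP
    obtain ⟨a0, ha0, b0, hb0, hab0⟩ := hP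
    set U : Finset G :=
      ((S ×ˢ S).filter (fun p => r 1 (p.1⁻¹ * p.2))).image (fun p => p.1⁻¹ * p.2) with hU
    have hUne : U.Nonempty :=
      ⟨a0⁻¹ * b0, Finset.mem_image.mpr ⟨(a0, b0),
        Finset.mem_filter.mpr ⟨Finset.mem_product.mpr ⟨ha0, hb0⟩, hab0⟩, rfl⟩⟩
    obtain ⟨t0, ht0U, ht0min⟩ := hminU U hUne
    have ht0pos : r 1 t0 := by
      obtain ⟨p, hp, hpe⟩ := Finset.mem_image.mp ht0U
      have := (Finset.mem_filter.mp hp).2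
      rw [hpe] at this
      exact this
    have ht0C : t0 ∈ Cc := by
      intro f hf
      have hf1 : rle r 1 f ∧ rle r f t0 := by
        rcases hf with h | ⟨h1, h2⟩
        · exact h
        · exfalso
          rcases hrlet h1 h2 with h3 | h3
          · exact hasym h3 ht0pos
          · rw [h3] at ht0pos; exact hirr 1 ht0pos
      obtain ⟨hf1, hf2⟩ := hf1
      apply hiA
      intro a ha b hb hab
      have htU : a⁻¹ * b ∈ U :=
        Finset.mem_image.mpr ⟨(a, b),
          Finset.mem_filter.mpr ⟨Finset.mem_product.mpr ⟨ha, hb⟩, hab⟩, rfl⟩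
      have hnt : ¬ r (a⁻¹ * b) t0 := ht0min _ htU
      have h3 : rle r t0 (a⁻¹ * b) := by
        rcases htri t0 (a⁻¹ * b) with h | h | h
        · exact Or.inl h
        · exact Or.inr h
        · exact absurd h hnt
      have hft : rle r f (a⁻¹ * b) := hrlet hf2 h3
      have hgoal : r f ((a⁻¹ * b) * f) := by
        rcases hft with h | h
        · have h4 : rle r (a⁻¹ * b) ((a⁻¹ * b) * f) := by
            simpa using hrle_mul (a⁻¹ * b) hf1
          exact hrr h h4
        · rw [h]
          have := hL (a⁻¹ * b) 1 (a⁻¹ * b) hab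
          simpa using this
      have h5 := (hpos f ((a⁻¹ * b) * f)).mp hgoal
      have e : f⁻¹ * ((a⁻¹ * b) * f) = f⁻¹ * (a⁻¹ * b) * f := by group
      rw [e] at h5
      exact h5
    have hmem : t0 ∈ C := (hmemC t0).mpr ht0C
    rw [hbot] at hmem
    have := Subgroup.mem_bot.mp hmem
    rw [this] at ht0pos
    exact hirr 1 ht0pos
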